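/- Let g be the 4-dimensional solvable real Lie algebra with basis e_1,…,e_4 and nonzero brackets [e_2,e_3] = −e_3 and [e_2,e_4] = e_4, and for t ∈ ℝ let K_t be the endomorphism equal to +id on g⁺_t := span(e_2, e_3) and −id on g⁻_t := span(e_1, e_4 + t e_2). Then K_0 is linear C∞-pure-and-full at the 2nd stage, whereas for every t ≠ 0 the structure K_t is neither linear C∞-pure at the 2nd stage (one has 0 ≠ [e^3∧e^4] ∈ H^{2+}_{K_t}(g;ℝ) ∩ H^{2−}_{K_t}(g;ℝ), since e^3∧e^4 is K_t-anti-invariant, d-closed, not exact, and e^3∧e^4 + (1/t) d(e^3) = (1/t)(e^2 − t e^4)∧e^3 is K_t-invariant) nor linear C∞-full at the 2nd stage (the class [e^1∧e^2] does not lie in H^{2+}_{K_t}(g;ℝ) + H^{2−}_{K_t}(g;ℝ)). In particular, for nilpotent Lie algebras replaced by solvable ones, linear C∞-pure-and-full-ness at the 2nd stage can fail in dimension 4, and being linear C∞-pure or linear C∞-full at the 2nd stage is not stable under deformations. -/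

import Mathlib

open scoped BigOperators

noncomputable section ChevalleyEilenberg

variable (g : Type*) [LieRing g] [LieAlgebra ℝ g]

/-- The Chevalley–Eilenberg differential of an alternating `k`-form on a real Lie
algebra, as a function on `(k+1)`-tuples:
`(dα)(x_0,…,x_k) = Σ_{i<j} (−1)^{i+j} α([x_i,x_j], x_0,…,x̂_i,…,x̂_j,…,x_k)`. -/
def ceD : {k : ℕ} → AlternatingMap ℝ g ℝ (Fin k) → ((Fin (k + 1) → g) → ℝ)
  | 0, _ => 0
  | (k + 1), α => fun x =>
      ∑ i : Fin (k + 2), ∑ j : Fin (k + 2),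
        if hij : (i : ℕ) < (j : ℕ) then
          (-1 : ℝ) ^ ((i : ℕ) + (j : ℕ)) *
            α (fun m : Fin (k + 1) =>
                if hm : (m : ℕ) = 0 then ⁅x i, x j⁆
                else
                  x (j.succAbove
                      ((⟨(i : ℕ), by omega⟩ : Fin (k + 1)).succAbove
                        (⟨(m : ℕ) - 1, by omega⟩ : Fin k))))
        else 0

theorem ceD_zero {k : ℕ} : ceD g (0 : AlternatingMap ℝ g ℝ (Fin k)) = 0 := by
  cases k with
  | zero => rfl
  | succ k => funext x; simp [ceD]

theorem ceD_add {k : ℕ} (α β : AlternatingMap ℝ g ℝ (Fin k)) :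
    ceD g (α + β) = ceD g α + ceD g β := by
  cases k with
  | zero => funext x; simp [ceD]
  | succ k =>
    funext x
    simp only [ceD, Pi.add_apply, AlternatingMap.add_apply]
    rw [← Finset.sum_add_distrib]
    refine Finset.sum_congr rfl fun i _ => ?_
    rw [← Finset.sum_add_distrib]
    refine Finset.sum_congr rfl fun j _ => ?_
    split
    · ring
    · ring

theorem ceD_smul {k : ℕ} (c : ℝ) (α : AlternatingMap ℝ g ℝ (Fin k)) :
    ceD g (c • α) = c • ceD g α := by
  cases k with
  | zero => funext x; simp [ceD]
  | succ k =>
    funext x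
    simp only [ceD, Pi.smul_apply, AlternatingMap.smul_apply, smul_eq_mul,
      Finset.mul_sum]
    refine Finset.sum_congr rfl fun i _ => ?_
    refine Finset.sum_congr rfl fun j _ => ?_
    split
    · ring
    · ring

/-- The space of `d`-closed `k`-forms. -/
def Zsub (k : ℕ) : Submodule ℝ (AlternatingMap ℝ g ℝ (Fin k)) where
  carrier := {α | ceD g α = 0}
  add_mem' := by
    intro a b ha hb
    simp only [Set.mem_setOf_eq] at *
    rw [ceD_add, ha, hb, add_zero]
  zero_mem' := by
    simpa only [Set.mem_setOf_eq] using ceD_zero g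
  smul_mem' := by
    intro c a ha
    simp only [Set.mem_setOf_eq] at *
    rw [ceD_smul, ha, smul_zero]

/-- The space of `d`-exact `k`-forms. -/
def Bsub : (k : ℕ) → Submodule ℝ (AlternatingMap ℝ g ℝ (Fin k))
  | 0 => ⊥
  | (k + 1) =>
    { carrier := {α | ∃ β : AlternatingMap ℝ g ℝ (Fin k), ceD g β = ⇑α}
      add_mem' := by
        rintro a b ⟨βa, hβa⟩ ⟨βb, hβb⟩
        exact ⟨βa + βb, by rw [ceD_add, hβa, hβb]; ext x; simp⟩
      zero_mem' := ⟨0, by rw [ceD_zero]; ext x; simp⟩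
      smul_mem' := by
        rintro c a ⟨β, hβ⟩
        exact ⟨c • β, by rw [ceD_smul, hβ]; rfl⟩ }

/-- The `k`-th Lie algebra cohomology `H^k(g;ℝ) = ker d / im d`. -/
abbrev Hcoh (k : ℕ) : Type _ :=
  @HasQuotient.Quotient ↥(Zsub g k) _ Submodule.hasQuotient ((Bsub g k).comap (Zsub g k).subtype)

/-- The cohomology class of a `d`-closed `k`-form. -/
def cls {k : ℕ} (α : AlternatingMap ℝ g ℝ (Fin k)) (hα : ceD g α = 0) : Hcoh g k :=
  Submodule.Quotient.mk (⟨α, hα⟩ : Zsub g k)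

/-- The subgroup `H^{k+}_K(g;ℝ)` of classes admitting a `d`-closed `K`-invariant
representative.  (The set of such classes is a linear subspace, so taking its span
does not enlarge it.) -/
def Hplus (K : g →ₗ[ℝ] g) (k : ℕ) : Submodule ℝ (Hcoh g k) :=
  Submodule.span ℝ
    {c | ∃ (α : AlternatingMap ℝ g ℝ (Fin k)) (hα : ceD g α = 0),
        α.compLinearMap K = α ∧ c = cls g α hα}

/-- The subgroup `H^{k−}_K(g;ℝ)` of classes admitting a `d`-closed
`K`-anti-invariant representative. -/
def Hminus (K : g →ₗ[ℝ] g) (k : ℕ) : Submodule ℝ (Hcoh g k) :=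
  Submodule.span ℝ
    {c | ∃ (α : AlternatingMap ℝ g ℝ (Fin k)) (hα : ceD g α = 0),
        α.compLinearMap K = -α ∧ c = cls g α hα}

/-- The wedge product of `k` linear functionals, as an alternating `k`-form. -/
def wedge {k : ℕ} (fs : Fin k → (g →ₗ[ℝ] ℝ)) :
    AlternatingMap ℝ g ℝ (Fin k) :=
  MultilinearMap.alternatization
    ((MultilinearMap.mkPiAlgebra ℝ (Fin k) ℝ).compLinearMap fs)

end ChevalleyEilenberg

section Aux

variable (g : Type*) [LieRing g] [LieAlgebra ℝ g]

theorem wedge1_apply (f : Fin 1 → (g →ₗ[ℝ] ℝ)) (x : Fin 1 → g) :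
    wedge g f x = f 0 (x 0) := by
  rw [wedge, MultilinearMap.alternatization_apply]
  simp [MultilinearMap.domDomCongr_apply, MultilinearMap.compLinearMap_apply,
    MultilinearMap.mkPiAlgebra_apply]

theorem wedge2_apply (f : Fin 2 → (g →ₗ[ℝ] ℝ)) (x : Fin 2 → g) :
    wedge g f x = f 0 (x 0) * f 1 (x 1) - f 0 (x 1) * f 1 (x 0) := by
  rw [wedge, MultilinearMap.alternatization_apply]
  rw [show (Finset.univ : Finset (Equiv.Perm (Fin 2))) = {1, Equiv.swap 0 1} by decide]
  rw [Finset.sum_insert (by decide), Finset.sum_singleton]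
  simp [MultilinearMap.domDomCongr_apply, MultilinearMap.compLinearMap_apply,
    MultilinearMap.mkPiAlgebra_apply, Fin.prod_univ_two, Equiv.swap_apply_left,
    Equiv.swap_apply_right]
  ring

theorem ceD1_apply (β : AlternatingMap ℝ g ℝ (Fin 1)) (x : Fin 2 → g) :
    ceD g β x = -β ![⁅x 0, x 1⁆] := by
  show (∑ i : Fin 2, ∑ j : Fin 2, _) = _
  rw [Fin.sum_univ_two, Fin.sum_univ_two, Fin.sum_univ_two]
  norm_num
  congr 1
  ext m
  fin_cases m <;> simp

theorem ceD2_apply (α : AlternatingMap ℝ g ℝ (Fin 2)) (x : Fin 3 → g) :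
    ceD g α x = -α ![⁅x 0, x 1⁆, x 2] + α ![⁅x 0, x 2⁆, x 1] - α ![⁅x 1, x 2⁆, x 0] := by
  show (∑ i : Fin 3, ∑ j : Fin 3, _) = _
  rw [Fin.sum_univ_three, Fin.sum_univ_three, Fin.sum_univ_three, Fin.sum_univ_three]
  norm_num
  have c1 : ∀ m : Fin 2, (if h : m = 0 then ⁅x 0, x 1⁆ else
      x (Fin.succAbove 1 ⟨(m:ℕ) - 1 + 1, by omega⟩)) = ![⁅x 0, x 1⁆, x 2] m := by
    intro m; fin_cases m <;> simp
  have c2 : ∀ m : Fin 2, (if h : m = 0 then ⁅x 0, x 2⁆ else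
      x (Fin.succAbove 2 ⟨(m:ℕ) - 1 + 1, by omega⟩)) = ![⁅x 0, x 2⁆, x 1] m := by
    intro m; fin_cases m <;> simp [Fin.succAbove]
  have c3 : ∀ m : Fin 2, (if h : m = 0 then ⁅x 1, x 2⁆ else
      x (Fin.succAbove 2 (Fin.succAbove 1 ⟨(m:ℕ) - 1, by omega⟩))) = ![⁅x 1, x 2⁆, x 0] m := by
    intro m; fin_cases m <;> simp [Fin.succAbove]
  rw [funext c1, funext c2, funext c3]
  ring

variable {g}

theorem upd0 (x y z : g) : Function.update ![x, y] 0 z = ![z, y] := by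
  funext m; fin_cases m <;> simp

theorem upd1 (x y z : g) : Function.update ![x, y] 1 z = ![x, z] := by
  funext m; fin_cases m <;> simp [Function.update]

theorem alt2_negl (α : AlternatingMap ℝ g ℝ (Fin 2)) (x y : g) :
    α ![-x, y] = -α ![x, y] := by
  have h : (![-x, y] : Fin 2 → g) = Function.update ![x, y] 0 ((-1 : ℝ) • x) := by
    rw [upd0, neg_one_smul]
  rw [h, AlternatingMap.map_update_smul]
  rw [upd0]
  simp

theorem alt2_negr (α : AlternatingMap ℝ g ℝ (Fin 2)) (x y : g) :
    α ![x, -y] = -α ![x, y] := by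
  have h : (![x, -y] : Fin 2 → g) = Function.update ![x, y] 1 ((-1 : ℝ) • y) := by
    rw [upd1, neg_one_smul]
  rw [h, AlternatingMap.map_update_smul]
  rw [upd1]
  simp

theorem alt2_combr (α : AlternatingMap ℝ g ℝ (Fin 2)) (x u v : g) (a b : ℝ) :
    α ![x, a • u + b • v] = a * α ![x, u] + b * α ![x, v] := by
  have h : (![x, a • u + b • v] : Fin 2 → g) = Function.update ![x, u] 1 (a • u + b • v) := by
    rw [upd1]
  rw [h, AlternatingMap.map_update_add, AlternatingMap.map_update_smul,
    AlternatingMap.map_update_smul, upd1, upd1]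
  simp

theorem alt2_zerol (α : AlternatingMap ℝ g ℝ (Fin 2)) (y : g) : α ![0, y] = 0 :=
  α.toMultilinearMap.map_coord_zero 0 rfl

theorem alt2_zeror (α : AlternatingMap ℝ g ℝ (Fin 2)) (x : g) : α ![x, 0] = 0 :=
  α.toMultilinearMap.map_coord_zero 1 rfl

theorem alt2_diag (α : AlternatingMap ℝ g ℝ (Fin 2)) (x : g) : α ![x, x] = 0 :=
  α.map_eq_zero_of_eq _ (show (![x, x] : Fin 2 → g) 0 = ![x, x] 1 from rfl)
    (by decide : (0 : Fin 2) ≠ 1)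

theorem alt2_swap (α : AlternatingMap ℝ g ℝ (Fin 2)) (x y : g) :
    α ![y, x] = -α ![x, y] := by
  have h : (![y, x] : Fin 2 → g) = ![x, y] ∘ Equiv.swap 0 1 := by
    funext m; fin_cases m <;> simp
  rw [h, AlternatingMap.map_swap _ _ (by decide : (0 : Fin 2) ≠ 1)]

variable (e : Module.Basis (Fin 4) ℝ g)

theorem coordE (i j : Fin 4) : e.coord i (e j) = if j = i then 1 else 0 := by
  simp [Module.Basis.coord_apply, Module.Basis.repr_self, Finsupp.single_apply]

theorem alt2_ext {α β : AlternatingMap ℝ g ℝ (Fin 2)}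
    (H : ∀ i j : Fin 4, α ![e i, e j] = β ![e i, e j]) : α = β := by
  refine Module.Basis.ext_alternating e fun v _ => ?_
  have h : (fun m : Fin 2 => e (v m)) = ![e (v 0), e (v 1)] := by
    funext m; fin_cases m <;> rfl
  rw [h]; exact H (v 0) (v 1)

section Brackets

variable (hbr : ∀ i j : Fin 4, i < j → ⁅e i, e j⁆ =
      (if i = 1 ∧ j = 2 then -e 2 else if i = 1 ∧ j = 3 then e 3 else 0))

include hbr

theorem brfull (i j : Fin 4) : ⁅e i, e j⁆ =
    (if i = 1 ∧ j = 2 then -e 2 else if i = 1 ∧ j = 3 then e 3 else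
     if i = 2 ∧ j = 1 then e 2 else if i = 3 ∧ j = 1 then -e 3 else 0) := by
  rcases lt_trichotomy i j with h | h | h
  · rw [hbr i j h]
    fin_cases i <;> fin_cases j <;> simp_all
  · subst h; simp [lie_self]; fin_cases i <;> simp
  · rw [← lie_skew, hbr j i h]
    fin_cases i <;> fin_cases j <;> simp_all

theorem coord_bracket (x y : g) (k : Fin 4) :
    e.coord k ⁅x, y⁆ =
      (if k = 2 then e.coord 2 x * e.coord 1 y - e.coord 1 x * e.coord 2 y
       else if k = 3 then e.coord 1 x * e.coord 3 y - e.coord 3 x * e.coord 1 y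
       else 0) := by
  have hx := Module.Basis.sum_repr e x
  have hy := Module.Basis.sum_repr e y
  calc e.coord k ⁅x, y⁆ = e.coord k ⁅∑ i, e.repr x i • e i, ∑ j, e.repr y j • e j⁆ := by
        rw [hx, hy]
    _ = ∑ i, ∑ j, e.repr x i * e.repr y j * e.coord k ⁅e i, e j⁆ := by
        set B : g →ₗ[ℝ] g →ₗ[ℝ] ℝ :=
          LinearMap.mk₂ ℝ (fun a b => e.coord k ⁅a, b⁆)
            (fun a a' b => by rw [add_lie, map_add])
            (fun c a b => by rw [smul_lie, map_smul])
            (fun a b b' => by rw [lie_add, map_add])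
            (fun c a b => by rw [lie_smul, map_smul]) with hB
        show B (∑ i, e.repr x i • e i) (∑ j, e.repr y j • e j) = _
        rw [map_sum B, LinearMap.coe_sum, Finset.sum_apply]
        refine Finset.sum_congr rfl fun i _ => ?_
        rw [LinearMap.map_smul₂]
        rw [map_sum (B (e i)), Finset.smul_sum]
        refine Finset.sum_congr rfl fun j _ => ?_
        rw [map_smul]
        simp [hB, mul_assoc]
    _ = _ := by
        simp only [Fin.sum_univ_four]
        simp only [brfull e hbr]
        norm_num
        fin_cases k <;>
          simp [Module.Basis.coord_apply, Module.Basis.repr_self, Finsupp.single_apply] <;> ring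

theorem br01 : ⁅e 0, e 1⁆ = 0 := by
  rw [brfull e hbr, if_neg (by decide), if_neg (by decide), if_neg (by decide),
    if_neg (by decide)]

theorem br02 : ⁅e 0, e 2⁆ = 0 := by
  rw [brfull e hbr, if_neg (by decide), if_neg (by decide), if_neg (by decide),
    if_neg (by decide)]

theorem br03 : ⁅e 0, e 3⁆ = 0 := by
  rw [brfull e hbr, if_neg (by decide), if_neg (by decide), if_neg (by decide),
    if_neg (by decide)]

theorem br12 : ⁅e 1, e 2⁆ = -e 2 := by
  rw [brfull e hbr, if_pos (by decide)]

theorem br13 : ⁅e 1, e 3⁆ = e 3 := by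
  rw [brfull e hbr, if_neg (by decide), if_pos (by decide)]

theorem br23 : ⁅e 2, e 3⁆ = 0 := by
  rw [brfull e hbr, if_neg (by decide), if_neg (by decide), if_neg (by decide),
    if_neg (by decide)]

theorem cb0 (x y : g) : e.coord 0 ⁅x, y⁆ = 0 := by
  rw [coord_bracket e hbr, if_neg (by decide), if_neg (by decide)]

theorem cb1 (x y : g) : e.coord 1 ⁅x, y⁆ = 0 := by
  rw [coord_bracket e hbr, if_neg (by decide), if_neg (by decide)]

theorem cb2 (x y : g) : e.coord 2 ⁅x, y⁆ =
    e.coord 2 x * e.coord 1 y - e.coord 1 x * e.coord 2 y := by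
  rw [coord_bracket e hbr, if_pos rfl]

theorem cb3 (x y : g) : e.coord 3 ⁅x, y⁆ =
    e.coord 1 x * e.coord 3 y - e.coord 3 x * e.coord 1 y := by
  rw [coord_bracket e hbr, if_neg (by decide), if_pos rfl]

theorem dW01 : ceD g (wedge g ![e.coord 0, e.coord 1]) = 0 := by
  funext x
  rw [ceD2_apply]
  simp only [wedge2_apply, Matrix.cons_val_zero, Matrix.cons_val_one, Matrix.head_cons,
    cb0 e hbr, cb1 e hbr, cb2 e hbr, cb3 e hbr, Pi.zero_apply]
  ring

theorem dW12 : ceD g (wedge g ![e.coord 1, e.coord 2]) = 0 := by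
  funext x
  rw [ceD2_apply]
  simp only [wedge2_apply, Matrix.cons_val_zero, Matrix.cons_val_one, Matrix.head_cons,
    cb0 e hbr, cb1 e hbr, cb2 e hbr, cb3 e hbr, Pi.zero_apply]
  ring

theorem dW13 : ceD g (wedge g ![e.coord 1, e.coord 3]) = 0 := by
  funext x
  rw [ceD2_apply]
  simp only [wedge2_apply, Matrix.cons_val_zero, Matrix.cons_val_one, Matrix.head_cons,
    cb0 e hbr, cb1 e hbr, cb2 e hbr, cb3 e hbr, Pi.zero_apply]
  ring

theorem dW23 : ceD g (wedge g ![e.coord 2, e.coord 3]) = 0 := by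
  funext x
  rw [ceD2_apply]
  simp only [wedge2_apply, Matrix.cons_val_zero, Matrix.cons_val_one, Matrix.head_cons,
    cb0 e hbr, cb1 e hbr, cb2 e hbr, cb3 e hbr, Pi.zero_apply]
  ring

theorem dE2 : ceD g (wedge g ![e.coord 2]) = ⇑(wedge g ![e.coord 1, e.coord 2]) := by
  funext x
  rw [ceD1_apply]
  simp only [wedge1_apply, wedge2_apply, Matrix.cons_val_zero, Matrix.cons_val_one,
    Matrix.head_cons, cb0 e hbr, cb1 e hbr, cb2 e hbr, cb3 e hbr]
  ring

theorem dE3 : ceD g (wedge g ![e.coord 3]) = -⇑(wedge g ![e.coord 1, e.coord 3]) := by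
  funext x
  rw [ceD1_apply]
  simp only [wedge1_apply, wedge2_apply, Matrix.cons_val_zero, Matrix.cons_val_one,
    Matrix.head_cons, cb0 e hbr, cb1 e hbr, cb2 e hbr, cb3 e hbr, Pi.neg_apply]
  ring

theorem closed03 {α : AlternatingMap ℝ g ℝ (Fin 2)} (hα : ceD g α = 0) :
    α ![e 0, e 3] = 0 := by
  have h := congrFun hα ![e 0, e 1, e 3]
  rw [ceD2_apply] at h
  simp only [Matrix.cons_val_zero, Matrix.cons_val_one, Matrix.head_cons,
    Matrix.cons_val_two, Matrix.tail_cons, Pi.zero_apply] at h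
  rw [br01 e hbr, br03 e hbr, br13 e hbr] at h
  rw [alt2_zerol, alt2_zerol, alt2_swap] at h
  linarith

theorem closed02 {α : AlternatingMap ℝ g ℝ (Fin 2)} (hα : ceD g α = 0) :
    α ![e 0, e 2] = 0 := by
  have h := congrFun hα ![e 0, e 1, e 2]
  rw [ceD2_apply] at h
  simp only [Matrix.cons_val_zero, Matrix.cons_val_one, Matrix.head_cons,
    Matrix.cons_val_two, Matrix.tail_cons, Pi.zero_apply] at h
  rw [br01 e hbr, br02 e hbr, br12 e hbr] at h
  rw [alt2_zerol, alt2_zerol, alt2_negl, alt2_swap] at h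
  linarith

end Brackets

end Aux

noncomputable section

section Solv

variable (g : Type*) [LieRing g] [LieAlgebra ℝ g] (e : Module.Basis (Fin 4) ℝ g)

/-- `g⁺_t = span(e_2, e_3)` (0-indexed: `e 1, e 2`), independent of `t`. -/
def gP : Submodule ℝ g := Submodule.span ℝ {e 1, e 2}

/-- `g⁻_t = span(e_1, e_4 + t e_2)` (0-indexed: `e 0, e 3 + t • e 1`). -/
def gM (t : ℝ) : Submodule ℝ g := Submodule.span ℝ {e 0, e 3 + t • e 1}

set_option maxHeartbeats 4000000 in
/-- On the 4-dimensional solvable Lie algebra with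
`[e_2,e_3] = −e_3`, `[e_2,e_4] = e_4`, the D-complex structure `K_0` is linear
C∞-pure-and-full at the 2nd stage, whereas for `t ≠ 0` the structure `K_t` is
neither linear C∞-pure at the 2nd stage
(`0 ≠ [e^3∧e^4] ∈ H^{2+}_{K_t} ∩ H^{2−}_{K_t}`) nor linear C∞-full at the 2nd
stage (`[e^1∧e^2] ∉ H^{2+}_{K_t} + H^{2−}_{K_t}`). -/
theorem solvable_deformation_pure_full_unstable
    (hbr : ∀ i j : Fin 4, i < j → ⁅e i, e j⁆ =
      (if i = 1 ∧ j = 2 then -e 2 else if i = 1 ∧ j = 3 then e 3 else 0)) :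
    (∀ K : g →ₗ[ℝ] g, (∀ x ∈ gP g e, K x = x) → (∀ x ∈ gM g e 0, K x = -x) →
      Hplus g K 2 ⊓ Hminus g K 2 = ⊥ ∧ Hplus g K 2 ⊔ Hminus g K 2 = ⊤) ∧
    (∀ t : ℝ, t ≠ 0 → ∀ K : g →ₗ[ℝ] g,
      (∀ x ∈ gP g e, K x = x) → (∀ x ∈ gM g e t, K x = -x) →
      (wedge g ![e.coord 2, e.coord 3]).compLinearMap K =
        -(wedge g ![e.coord 2, e.coord 3]) ∧
      ceD g (wedge g ![e.coord 2]) = ⇑(wedge g ![e.coord 1, e.coord 2]) ∧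
      (wedge g ![e.coord 2, e.coord 3] +
          (1 / t) • wedge g ![e.coord 1, e.coord 2]).compLinearMap K =
        wedge g ![e.coord 2, e.coord 3] +
          (1 / t) • wedge g ![e.coord 1, e.coord 2] ∧
      ¬ (∃ β : AlternatingMap ℝ g ℝ (Fin 1),
          ceD g β = ⇑(wedge g ![e.coord 2, e.coord 3])) ∧
      (∃ h34 : ceD g (wedge g ![e.coord 2, e.coord 3]) = 0,
        cls g (wedge g ![e.coord 2, e.coord 3]) h34 ≠ 0 ∧
        cls g (wedge g ![e.coord 2, e.coord 3]) h34 ∈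
          Hplus g K 2 ⊓ Hminus g K 2) ∧
      (∃ h12 : ceD g (wedge g ![e.coord 0, e.coord 1]) = 0,
        cls g (wedge g ![e.coord 0, e.coord 1]) h12 ∉
          Hplus g K 2 ⊔ Hminus g K 2)) := by
  constructor
  · -- K₀ is pure and full
    intro K hKP hKM
    have hK1 : K (e 1) = e 1 := hKP _ (Submodule.subset_span (by simp))
    have hK2 : K (e 2) = e 2 := hKP _ (Submodule.subset_span (by simp))
    have hK0 : K (e 0) = -e 0 := hKM _ (Submodule.subset_span (by simp))
    have hK3 : K (e 3) = -e 3 := by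
      have h := hKM (e 3 + (0 : ℝ) • e 1) (Submodule.subset_span (by simp))
      simpa using h
    have htup : ∀ i j : Fin 4, (fun m => K (![e i, e j] m)) = ![K (e i), K (e j)] := by
      intro i j; funext m; fin_cases m <;> rfl
    have hanti01 : (wedge g ![e.coord 0, e.coord 1]).compLinearMap K =
        -(wedge g ![e.coord 0, e.coord 1]) := by
      refine alt2_ext e fun i j => ?_
      rw [AlternatingMap.compLinearMap_apply, AlternatingMap.neg_apply, htup]
      fin_cases i <;> fin_cases j <;>
        simp [wedge2_apply, hK0, hK1, hK2, hK3, coordE, map_neg] <;> ring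
    have hanti23 : (wedge g ![e.coord 2, e.coord 3]).compLinearMap K =
        -(wedge g ![e.coord 2, e.coord 3]) := by
      refine alt2_ext e fun i j => ?_
      rw [AlternatingMap.compLinearMap_apply, AlternatingMap.neg_apply, htup]
      fin_cases i <;> fin_cases j <;>
        simp [wedge2_apply, hK0, hK1, hK2, hK3, coordE, map_neg] <;> ring
    have hplusbot : Hplus g K 2 = ⊥ := by
      rw [Hplus, Submodule.span_eq_bot]
      rintro c ⟨α, hα, hinv, rfl⟩
      have hv : ∀ i j : Fin 4, α ![K (e i), K (e j)] = α ![e i, e j] := by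
        intro i j
        have h := congrArg (fun F : AlternatingMap ℝ g ℝ (Fin 2) => F ![e i, e j]) hinv
        simpa [AlternatingMap.compLinearMap_apply, htup] using h
      have a01 : α ![e 0, e 1] = 0 := by
        have h := hv 0 1; rw [hK0, hK1, alt2_negl] at h; linarith
      have a02 : α ![e 0, e 2] = 0 := by
        have h := hv 0 2; rw [hK0, hK2, alt2_negl] at h; linarith
      have a13 : α ![e 1, e 3] = 0 := by
        have h := hv 1 3; rw [hK1, hK3, alt2_negr] at h; linarith
      have a23 : α ![e 2, e 3] = 0 := by
        have h := hv 2 3; rw [hK2, hK3, alt2_negr] at h; linarith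
      have a03 : α ![e 0, e 3] = 0 := closed03 e hbr hα
      have a10 : α ![e 1, e 0] = 0 := by rw [alt2_swap, a01, neg_zero]
      have a20 : α ![e 2, e 0] = 0 := by rw [alt2_swap, a02, neg_zero]
      have a30 : α ![e 3, e 0] = 0 := by rw [alt2_swap, a03, neg_zero]
      have a31 : α ![e 3, e 1] = 0 := by rw [alt2_swap, a13, neg_zero]
      have a32 : α ![e 3, e 2] = 0 := by rw [alt2_swap, a23, neg_zero]
      have a21 : α ![e 2, e 1] = -α ![e 1, e 2] := alt2_swap α _ _
      set a12 : ℝ := α ![e 1, e 2] with ha12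
      have hdec : α = a12 • wedge g ![e.coord 1, e.coord 2] := by
        refine alt2_ext e fun i j => ?_
        rw [AlternatingMap.smul_apply]
        fin_cases i <;> fin_cases j <;>
          simp [wedge2_apply, coordE, a01, a02, a03, a13, a23, a10, a20, a30, a31,
            a32, a21, alt2_diag] <;> rfl
      rw [cls, Submodule.Quotient.mk_eq_zero]
      have hmemB : α ∈ Bsub g 2 := by
        refine ⟨a12 • wedge g ![e.coord 2], ?_⟩
        rw [ceD_smul, dE2 e hbr, hdec]
        funext x
        simp
      exact Submodule.mem_comap.mpr hmemB
    constructor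
    · rw [hplusbot, bot_inf_eq]
    · rw [eq_top_iff]
      rintro c -
      obtain ⟨⟨α, hα⟩, rfl⟩ := Submodule.Quotient.mk_surjective _ c
      have a02 : α ![e 0, e 2] = 0 := closed02 e hbr hα
      have a03 : α ![e 0, e 3] = 0 := closed03 e hbr hα
      have a20 : α ![e 2, e 0] = 0 := by rw [alt2_swap, a02, neg_zero]
      have a30 : α ![e 3, e 0] = 0 := by rw [alt2_swap, a03, neg_zero]
      have a10 : α ![e 1, e 0] = -α ![e 0, e 1] := alt2_swap α _ _
      have a21 : α ![e 2, e 1] = -α ![e 1, e 2] := alt2_swap α _ _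
      have a31 : α ![e 3, e 1] = -α ![e 1, e 3] := alt2_swap α _ _
      have a32 : α ![e 3, e 2] = -α ![e 2, e 3] := alt2_swap α _ _
      set a01 : ℝ := α ![e 0, e 1] with ha01
      set a23 : ℝ := α ![e 2, e 3] with ha23
      set a12 : ℝ := α ![e 1, e 2] with ha12
      set a13 : ℝ := α ![e 1, e 3] with ha13
      have hdec : α = (a01 • wedge g ![e.coord 0, e.coord 1] +
          a23 • wedge g ![e.coord 2, e.coord 3]) +
          (a12 • wedge g ![e.coord 1, e.coord 2] +
            a13 • wedge g ![e.coord 1, e.coord 3]) := by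
        refine alt2_ext e fun i j => ?_
        simp only [AlternatingMap.add_apply, AlternatingMap.smul_apply]
        fin_cases i <;> fin_cases j <;>
          simp [wedge2_apply, coordE, a02, a03, a20, a30, a10, a21, a31, a32,
            alt2_diag] <;> ring
      have hsub : α - (a01 • wedge g ![e.coord 0, e.coord 1] +
          a23 • wedge g ![e.coord 2, e.coord 3]) ∈ Bsub g 2 := by
        have h2 : α - (a01 • wedge g ![e.coord 0, e.coord 1] +
            a23 • wedge g ![e.coord 2, e.coord 3]) =
            a12 • wedge g ![e.coord 1, e.coord 2] +
              a13 • wedge g ![e.coord 1, e.coord 3] :=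
          sub_eq_iff_eq_add'.mpr hdec
        refine ⟨a12 • wedge g ![e.coord 2] + (-a13) • wedge g ![e.coord 3], ?_⟩
        rw [ceD_add, ceD_smul, ceD_smul, dE2 e hbr, dE3 e hbr, h2]
        funext x
        simp
      have hmk : (Submodule.Quotient.mk (⟨α, hα⟩ : Zsub g 2) :
            Hcoh g 2) =
          a01 • cls g (wedge g ![e.coord 0, e.coord 1]) (dW01 e hbr) +
          a23 • cls g (wedge g ![e.coord 2, e.coord 3]) (dW23 e hbr) := by
        rw [cls, cls, ← Submodule.Quotient.mk_smul, ← Submodule.Quotient.mk_smul,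
          ← Submodule.Quotient.mk_add, Submodule.Quotient.eq]
        exact Submodule.mem_comap.mpr hsub
      rw [hmk]
      refine Submodule.mem_sup_right ?_
      exact add_mem
        (Submodule.smul_mem _ _ (Submodule.subset_span
          ⟨wedge g ![e.coord 0, e.coord 1], dW01 e hbr, hanti01, rfl⟩))
        (Submodule.smul_mem _ _ (Submodule.subset_span
          ⟨wedge g ![e.coord 2, e.coord 3], dW23 e hbr, hanti23, rfl⟩))
  · intro t ht K hKP hKM
    have hK1 : K (e 1) = e 1 := hKP _ (Submodule.subset_span (by simp))
    have hK2 : K (e 2) = e 2 := hKP _ (Submodule.subset_span (by simp))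
    have hK0 : K (e 0) = -e 0 := hKM _ (Submodule.subset_span (by simp))
    have hK3 : K (e 3) = -e 3 - (2 * t) • e 1 := by
      have h := hKM (e 3 + t • e 1) (Submodule.subset_span (by simp))
      rw [map_add, map_smul, hK1] at h
      have h3 : K (e 3) = -(e 3 + t • e 1) - t • e 1 := eq_sub_of_add_eq h
      rw [h3]; module
    have htup : ∀ i j : Fin 4, (fun m => K (![e i, e j] m)) = ![K (e i), K (e j)] := by
      intro i j; funext m; fin_cases m <;> rfl
    have hanti23 : (wedge g ![e.coord 2, e.coord 3]).compLinearMap K =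
        -(wedge g ![e.coord 2, e.coord 3]) := by
      refine alt2_ext e fun i j => ?_
      rw [AlternatingMap.compLinearMap_apply, AlternatingMap.neg_apply, htup]
      fin_cases i <;> fin_cases j <;>
        simp [wedge2_apply, hK0, hK1, hK2, hK3, coordE, map_neg, map_sub, map_smul] <;>
        ring
    have hinvmix : (wedge g ![e.coord 2, e.coord 3] +
        (1 / t) • wedge g ![e.coord 1, e.coord 2]).compLinearMap K =
        wedge g ![e.coord 2, e.coord 3] + (1 / t) • wedge g ![e.coord 1, e.coord 2] := by
      refine alt2_ext e fun i j => ?_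
      rw [AlternatingMap.compLinearMap_apply, htup]
      simp only [AlternatingMap.add_apply, AlternatingMap.smul_apply, smul_eq_mul]
      fin_cases i <;> fin_cases j <;>
        simp [wedge2_apply, hK0, hK1, hK2, hK3, coordE, map_neg, map_sub, map_smul] <;>
        field_simp <;> norm_num
    have hnotex : ¬∃ β : AlternatingMap ℝ g ℝ (Fin 1),
        ceD g β = ⇑(wedge g ![e.coord 2, e.coord 3]) := by
      rintro ⟨β, hβ⟩
      have h := congrFun hβ ![e 2, e 3]
      rw [ceD1_apply] at h
      simp only [Matrix.cons_val_zero, Matrix.cons_val_one, Matrix.head_cons] at h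
      rw [br23 e hbr] at h
      have hz : β ![(0 : g)] = 0 := β.toMultilinearMap.map_coord_zero 0 rfl
      rw [hz, wedge2_apply] at h
      simp [coordE] at h
    have hclmix : ceD g (wedge g ![e.coord 2, e.coord 3] +
        (1 / t) • wedge g ![e.coord 1, e.coord 2]) = 0 := by
      rw [ceD_add, ceD_smul, dW23 e hbr, dW12 e hbr]
      simp
    refine ⟨hanti23, dE2 e hbr, hinvmix, hnotex, ⟨dW23 e hbr, ?_, ?_⟩,
      dW01 e hbr, ?_⟩
    · intro h
      rw [cls, Submodule.Quotient.mk_eq_zero] at h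
      have hb : ∃ β : AlternatingMap ℝ g ℝ (Fin 1),
          ceD g β = ⇑(wedge g ![e.coord 2, e.coord 3]) := h
      exact hnotex hb
    · have hkey : cls g (wedge g ![e.coord 2, e.coord 3]) (dW23 e hbr) =
          cls g (wedge g ![e.coord 2, e.coord 3] +
            (1 / t) • wedge g ![e.coord 1, e.coord 2]) hclmix := by
        rw [cls, cls, Submodule.Quotient.eq]
        have hsub : wedge g ![e.coord 2, e.coord 3] -
            (wedge g ![e.coord 2, e.coord 3] +
              (1 / t) • wedge g ![e.coord 1, e.coord 2]) ∈ Bsub g 2 := by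
          refine ⟨(-(1 / t)) • wedge g ![e.coord 2], ?_⟩
          rw [ceD_smul, dE2 e hbr]
          funext x
          simp
        exact Submodule.mem_comap.mpr hsub
      refine Submodule.mem_inf.mpr ⟨?_, ?_⟩
      · rw [hkey]
        exact Submodule.subset_span ⟨_, hclmix, hinvmix, rfl⟩
      · exact Submodule.subset_span ⟨_, dW23 e hbr, hanti23, rfl⟩
    · intro hmem
      let ev : Zsub g 2 →ₗ[ℝ] ℝ :=
        { toFun := fun a => (a : AlternatingMap ℝ g ℝ (Fin 2)) ![e 0, e 1]
          map_add' := fun a b => by simp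
          map_smul' := fun c a => by simp }
      have hker : (Bsub g 2).comap (Zsub g 2).subtype ≤ LinearMap.ker ev := by
        rintro ⟨α, hα⟩ hm2
        have hb : ∃ β : AlternatingMap ℝ g ℝ (Fin 1), ceD g β = ⇑α := hm2
        obtain ⟨β, hβ⟩ := hb
        have h := congrFun hβ ![e 0, e 1]
        rw [ceD1_apply] at h
        simp only [Matrix.cons_val_zero, Matrix.cons_val_one, Matrix.head_cons] at h
        rw [br01 e hbr] at h
        have hz : β ![(0 : g)] = 0 := β.toMultilinearMap.map_coord_zero 0 rfl
        rw [hz] at h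
        rw [LinearMap.mem_ker]
        show (α : AlternatingMap ℝ g ℝ (Fin 2)) ![e 0, e 1] = 0
        simpa using h.symm
      let Φ : Hcoh g 2 →ₗ[ℝ] ℝ := Submodule.liftQ _ ev hker
      have hΦmk : ∀ (α : AlternatingMap ℝ g ℝ (Fin 2)) (hα : ceD g α = 0),
          Φ (cls g α hα) = α ![e 0, e 1] := fun α hα => rfl
      have hp : Hplus g K 2 ≤ LinearMap.ker Φ := by
        rw [Hplus]
        refine Submodule.span_le.mpr ?_
        rintro c ⟨α, hα, hinv, rfl⟩
        rw [SetLike.mem_coe, LinearMap.mem_ker, hΦmk]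
        have h := congrArg (fun F : AlternatingMap ℝ g ℝ (Fin 2) => F ![e 0, e 1]) hinv
        simp only [AlternatingMap.compLinearMap_apply] at h
        rw [htup 0 1, hK0, hK1, alt2_negl] at h
        linarith
      have hmi : Hminus g K 2 ≤ LinearMap.ker Φ := by
        rw [Hminus]
        refine Submodule.span_le.mpr ?_
        rintro c ⟨α, hα, hinv, rfl⟩
        rw [SetLike.mem_coe, LinearMap.mem_ker, hΦmk]
        have a03 : α ![e 0, e 3] = 0 := closed03 e hbr hα
        have h := congrArg (fun F : AlternatingMap ℝ g ℝ (Fin 2) => F ![e 0, e 3]) hinv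
        simp only [AlternatingMap.compLinearMap_apply, AlternatingMap.neg_apply] at h
        rw [htup 0 3, hK0, hK3, alt2_negl] at h
        have hcomb : α ![e 0, -e 3 - (2 * t) • e 1] =
            (-1) * α ![e 0, e 3] + (-(2 * t)) * α ![e 0, e 1] := by
          rw [show -e 3 - (2 * t) • e 1 = (-1 : ℝ) • e 3 + (-(2 * t)) • e 1 by module]
          exact alt2_combr α _ _ _ _ _
        rw [hcomb, a03] at h
        have h2 : 2 * t * α ![e 0, e 1] = 0 := by linarith
        rcases mul_eq_zero.mp h2 with h3 | h3
        · exact absurd (by linarith) ht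
        · exact h3
      have h0 := sup_le hp hmi hmem
      rw [LinearMap.mem_ker, hΦmk] at h0
      rw [wedge2_apply] at h0
      simp [coordE] at h0


end Solv

end
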